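/- Assume the continuum hypothesis. Then there exists a p-point ultrafilter on ℕ that is not weakly Hausdorff. -/

import Mathlib

/-- A function `f : ℕ → ℕ` is finite-to-one if every fiber is finite. -/
def FinToOne (f : ℕ → ℕ) : Prop := ∀ n : ℕ, (f ⁻¹' {n}).Finite

/-- An ultrafilter `U` on `ℕ` is Hausdorff if whenever two functions push it
forward to the same ultrafilter, they agree on a set in `U`. -/
def IsHausdorffUltra (U : Ultrafilter ℕ) : Prop :=
  ∀ f g : ℕ → ℕ, Ultrafilter.map f U = Ultrafilter.map g U →
    ∃ X ∈ U, ∀ x ∈ X, f x = g x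

/-- An ultrafilter `U` on `ℕ` is weakly Hausdorff if whenever two finite-to-one
functions push it forward to the same ultrafilter, they agree on a set in `U`. -/
def IsWeaklyHausdorffUltra (U : Ultrafilter ℕ) : Prop :=
  ∀ f g : ℕ → ℕ, FinToOne f → FinToOne g →
    Ultrafilter.map f U = Ultrafilter.map g U →
    ∃ X ∈ U, ∀ x ∈ X, f x = g x

/-- A nonprincipal ultrafilter `U` on `ℕ` is a p-point if for every countable
family of members of `U` there is a member of `U` almost contained in each. -/
def IsPPoint (U : Ultrafilter ℕ) : Prop :=
  (∀ n : ℕ, U ≠ pure n) ∧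
  ∀ Xs : ℕ → Set ℕ, (∀ n, Xs n ∈ U) → ∃ X ∈ U, ∀ n, (X \ Xs n).Finite


namespace PPH

open Classical

def blk (x : ℕ) : ℕ := Nat.log 2 (x+1)


/-- all elements of F lie in the same block -/
def SameBlk (F : Finset ℕ) : Prop := ∀ a ∈ F, ∀ b ∈ F, blk a = blk b

/-- the set of codes of ordered pairs of distinct elements of F -/
def pairsSet (F : Finset ℕ) : Set ℕ :=
  {n | ∃ a ∈ F, ∃ b ∈ F, a ≠ b ∧ n = Nat.pair a b}

lemma pairsSet_mono {F G : Finset ℕ} (h : F ⊆ G) : pairsSet F ⊆ pairsSet G := by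
  rintro n ⟨a, ha, b, hb, hab, rfl⟩
  exact ⟨a, h ha, b, h hb, hab, rfl⟩

lemma pairsSet_finite (F : Finset ℕ) : (pairsSet F).Finite := by
  apply Set.Finite.subset (((F ×ˢ F).finite_toSet).image (fun p => Nat.pair p.1 p.2))
  rintro n ⟨a, ha, b, hb, hab, rfl⟩
  exact ⟨(a,b), by simpa using ⟨ha, hb⟩, rfl⟩

def D : Set ℕ :=
  {n | (Nat.unpair n).1 ≠ (Nat.unpair n).2 ∧ blk (Nat.unpair n).1 = blk (Nat.unpair n).2}

lemma pairsSet_subset_D {F : Finset ℕ} (hF : SameBlk F) : pairsSet F ⊆ D := by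
  rintro n ⟨a, ha, b, hb, hab, rfl⟩
  constructor
  · simpa [Nat.unpair_pair] using hab
  · simpa [Nat.unpair_pair] using hF a ha b hb

/-- Good sets: contain full pair-sets of arbitrarily large same-block finsets -/
def Good (S : Set ℕ) : Prop :=
  ∀ m : ℕ, ∃ F : Finset ℕ, m ≤ F.card ∧ SameBlk F ∧ pairsSet F ⊆ S

lemma Good.mono {S T : Set ℕ} (h : Good S) (hST : S ⊆ T) : Good T := by
  intro m
  obtain ⟨F, h1, h2, h3⟩ := h m
  exact ⟨F, h1, h2, h3.trans hST⟩

/-- the k-th block as a finset -/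
def blkF (k : ℕ) : Finset ℕ := Finset.Ico (2^k - 1) (2^(k+1) - 1)

lemma blk_of_mem_blkF {k x : ℕ} (hx : x ∈ blkF k) : blk x = k := by
  simp only [blkF, Finset.mem_Ico] at hx
  have h1 : 2^k ≤ x + 1 := by
    have := Nat.one_le_two_pow (n := k); omega
  have h2 : x + 1 < 2^(k+1) := by
    have := Nat.one_le_two_pow (n := k+1); omega
  exact Nat.log_eq_of_pow_le_of_lt_pow h1 h2

lemma card_blkF (k : ℕ) : 2^k ≤ (blkF k).card := by
  rw [blkF, Nat.card_Ico]
  have h1 : 2^(k+1) = 2 * 2^k := by ring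
  have := Nat.one_le_two_pow (n := k)
  omega

lemma good_D : Good D := by
  intro m
  refine ⟨blkF m, ?_, ?_, ?_⟩
  · exact le_trans (Nat.le_of_lt (Nat.lt_two_pow_self (n := m))) (card_blkF m)
  · intro a ha b hb; rw [blk_of_mem_blkF ha, blk_of_mem_blkF hb]
  · exact pairsSet_subset_D (fun a ha b hb => by
      rw [blk_of_mem_blkF ha, blk_of_mem_blkF hb])

lemma Good.infinite {S : Set ℕ} (h : Good S) : S.Infinite := by
  rw [Set.infinite_coe_iff.symm]
  by_contra hfin
  rw [not_infinite_iff_finite] at hfin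
  have hSfin : S.Finite := Set.toFinite S
  obtain ⟨F, h1, h2, h3⟩ := h (hSfin.toFinset.card + 2)
  have hFne : F.Nonempty := Finset.card_pos.1 (by omega)
  set a := F.min' hFne with ha
  have hsub : (F.erase a).image (fun b => Nat.pair a b) ⊆ hSfin.toFinset := by
    intro n hn
    simp only [Finset.mem_image] at hn
    obtain ⟨b, hb, rfl⟩ := hn
    rw [Set.Finite.mem_toFinset]
    exact h3 ⟨a, F.min'_mem hFne, b, Finset.mem_of_mem_erase hb,
      (Finset.ne_of_mem_erase hb).symm, rfl⟩
  have hinj : Set.InjOn (fun b => Nat.pair a b) (F.erase a) := by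
    intro x _ y _ hxy
    simpa [Nat.pair_eq_pair] using hxy
  have hcard := Finset.card_le_card hsub
  rw [Finset.card_image_of_injOn hinj, Finset.card_erase_of_mem (F.min'_mem hFne)] at hcard
  omega


open Classical

/-- pre-Ramsey: extract a sequence where color to later elements depends only on the source -/
lemma preRamsey (r : ℕ) : ∀ (n : ℕ) (F : Finset ℕ) (c : ℕ → ℕ → Fin (r+1)),
    (r+2)^n ≤ F.card → ∃ G : Finset ℕ, G ⊆ F ∧ G.card = n ∧ ∃ col : ℕ → Fin (r+1),
      ∀ a ∈ G, ∀ b ∈ G, a < b → c a b = col a := by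
  intro n
  induction n with
  | zero => intro F c _; exact ⟨∅, Finset.empty_subset F, rfl, fun _ => 0, by simp⟩
  | succ n ih =>
    intro F c hF
    have hp : 1 ≤ (r+2)^n := Nat.one_le_two_pow.trans (Nat.pow_le_pow_left (by omega) n)
    obtain ⟨q, hq⟩ : ∃ q, (r+2)^n = q + 1 := ⟨(r+2)^n - 1, by omega⟩
    have hFpos : 0 < F.card := by
      have : 1 ≤ (r+2)^(n+1) := Nat.one_le_two_pow.trans (Nat.pow_le_pow_left (by omega) (n+1))
      omega
    have hFne : F.Nonempty := Finset.card_pos.1 hFpos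
    set a := F.min' hFne with ha
    set F' := F.erase a with hF'
    have hcardF' : (r+2)^(n+1) - 1 ≤ F'.card := by
      rw [hF', Finset.card_erase_of_mem (F.min'_mem hFne)]; omega
    have hpow : (r+2)^(n+1) = (r+2) * (r+2)^n := by ring
    -- pigeonhole
    have hmaps : ∀ b ∈ F', (c a b) ∈ (Finset.univ : Finset (Fin (r+1))) := by
      intro b _; exact Finset.mem_univ _
    have hineq : (Finset.univ : Finset (Fin (r+1))).card * q < F'.card := by
      rw [Finset.card_univ, Fintype.card_fin]
      obtain ⟨u, hu⟩ : ∃ u, (r+1)*q = u := ⟨_, rfl⟩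
      have e0 : (r+2)^(n+1) = u + (q+r+2) := by rw [hpow, hq, ← hu]; ring
      rw [hu]
      omega
    obtain ⟨j, _, hj⟩ := Finset.exists_lt_card_fiber_of_mul_lt_card_of_maps_to hmaps hineq
    set H := F'.filter (fun b => c a b = j) with hH
    have hcardH : (r+2)^n ≤ H.card := by rw [hq]; omega
    obtain ⟨G', hG'sub, hG'card, col', hcol'⟩ := ih H (c) hcardH
    refine ⟨insert a G', ?_, ?_, fun x => if x = a then j else col' x, ?_⟩
    · intro x hx
      rcases Finset.mem_insert.1 hx with rfl | hx
      · exact F.min'_mem hFne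
      · exact Finset.mem_of_mem_erase (Finset.mem_of_mem_filter x (hG'sub hx))
    · have hnot : a ∉ G' := fun hcon =>
        (Finset.notMem_erase a F) (Finset.mem_of_mem_filter a (hG'sub hcon))
      rw [Finset.card_insert_of_notMem hnot, hG'card]
    · intro x hx y hy hxy
      rcases Finset.mem_insert.1 hx with rfl | hx
      · have hy' : y ∈ G' := by
          rcases Finset.mem_insert.1 hy with rfl | hy'
          · omega
          · exact hy'
        have := hG'sub hy'
        rw [hH, Finset.mem_filter] at this
        simp only [if_pos rfl]
        exact this.2
      · have hxa : x ≠ a := Finset.ne_of_mem_erase (Finset.mem_of_mem_filter x (hG'sub hx))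
        have hy' : y ∈ G' := by
          rcases Finset.mem_insert.1 hy with rfl | hy'
          · exfalso
            have hxF : x ∈ F := Finset.mem_of_mem_erase (Finset.mem_of_mem_filter x (hG'sub hx))
            have := F.min'_le x hxF
            omega
          · exact hy'
        simp only [if_neg hxa]
        exact hcol' x hx y hy' hxy

/-- Finite Ramsey theorem for ordered pairs, r+1 colors. -/
lemma ramsey (r m : ℕ) (F : Finset ℕ) (c : ℕ → ℕ → Fin (r+1))
    (hF : (r+2)^((r+1)*m) ≤ F.card) :
    ∃ G : Finset ℕ, G ⊆ F ∧ m ≤ G.card ∧ ∃ j : Fin (r+1),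
      ∀ a ∈ G, ∀ b ∈ G, a < b → c a b = j := by
  rcases Nat.eq_zero_or_pos m with rfl | hm
  · exact ⟨∅, Finset.empty_subset F, le_refl 0, 0, by simp⟩
  obtain ⟨G, hGF, hGcard, col, hcol⟩ := preRamsey r ((r+1)*m) F c hF
  have hmaps : ∀ b ∈ G, (col b) ∈ (Finset.univ : Finset (Fin (r+1))) := fun b _ =>
    Finset.mem_univ _
  have hineq : (Finset.univ : Finset (Fin (r+1))).card * (m-1) < G.card := by
    rw [Finset.card_univ, Fintype.card_fin, hGcard]
    exact Nat.mul_lt_mul_of_le_of_lt (le_refl (r+1)) (by omega) (by omega)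
  obtain ⟨j, _, hj⟩ := Finset.exists_lt_card_fiber_of_mul_lt_card_of_maps_to hmaps hineq
  refine ⟨G.filter (fun x => col x = j), fun x hx => hGF (Finset.mem_of_mem_filter x hx),
    by omega, j, ?_⟩
  intro a ha b hb hab
  rw [Finset.mem_filter] at ha hb
  rw [hcol a ha.1 b hb.1 hab, ha.2]


/-- match an optional constant: either equal to the constant, or at least i -/
def OMatch (v : Option ℕ) (i x : ℕ) : Prop :=
  match v with
  | some c => x = c
  | none => i ≤ x

lemma OMatch_anti {v : Option ℕ} {i j x : ℕ} (hij : i ≤ j) (h : OMatch v j x) :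
    OMatch v i x := by
  cases v with
  | some c => exact h
  | none => exact le_trans hij h

/-- one-orientation dichotomy lemma -/
lemma orient (B : Set ℕ) (Φ : ℕ → Finset ℕ → Prop)
    (hered : ∀ i (F G : Finset ℕ), G ⊆ F → Φ i F → Φ i G)
    (anti : ∀ i j (F : Finset ℕ), i ≤ j → Φ j F → Φ i F)
    (ex : ∀ m i, ∃ F : Finset ℕ, m ≤ F.card ∧ SameBlk F ∧ pairsSet F ⊆ B ∧ Φ i F)
    (e : ℕ → ℕ → ℕ) :
    ∃ v : Option ℕ, ∀ m i, ∃ F : Finset ℕ, m ≤ F.card ∧ SameBlk F ∧ pairsSet F ⊆ B ∧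
      Φ i F ∧ ∀ a ∈ F, ∀ b ∈ F, a < b → OMatch v i (e a b) := by
  by_cases hP : ∃ c : ℕ, ∀ m i, ∃ F : Finset ℕ, m ≤ F.card ∧ SameBlk F ∧
      pairsSet F ⊆ B ∧ Φ i F ∧ ∀ a ∈ F, ∀ b ∈ F, a < b → e a b = c
  · obtain ⟨c, hc⟩ := hP
    exact ⟨some c, fun m i => by
      obtain ⟨F, h1, h2, h3, h4, h5⟩ := hc m i
      exact ⟨F, h1, h2, h3, h4, h5⟩⟩
  · push_neg at hP
    -- for each c, choose bounds
    choose mv iv hbound using hP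
    refine ⟨none, fun m i => ?_⟩
    set μ := (Finset.range i).sup mv with hμ
    set ν := max i ((Finset.range i).sup iv) with hν
    set M := max m μ + 1 with hM
    obtain ⟨F₀, h1, h2, h3, h4⟩ := ex ((i+2)^((i+1)*M)) ν
    -- Ramsey with colors = min (e a b) i
    obtain ⟨G, hGF, hGcard, j, hj⟩ := ramsey i M F₀
      (fun a b => ⟨min (e a b) i, by omega⟩) h1
    have hGB : pairsSet G ⊆ B := (pairsSet_mono hGF).trans h3
    have hGblk : SameBlk G := fun a ha b hb => h2 a (hGF ha) b (hGF hb)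
    have hGΦν : Φ ν G := hered ν F₀ G hGF h4
    by_cases hji : (j : ℕ) < i
    · exfalso
      obtain ⟨a, ha, b, hb, hab, hne⟩ := hbound (j : ℕ) G
        (by have : mv (j : ℕ) ≤ μ := Finset.le_sup (Finset.mem_range.2 hji); omega)
        hGblk hGB
        (anti _ ν G (le_trans (Finset.le_sup (f := iv) (Finset.mem_range.2 hji))
          (le_max_right _ _)) hGΦν)
      have hval : min (e a b) i = (j : ℕ) := congrArg Fin.val (hj a ha b hb hab)
      omega
    · refine ⟨G, le_trans (by omega) hGcard, hGblk, hGB,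
        anti i ν G (le_max_left _ _) hGΦν, ?_⟩
      intro a ha b hb hab
      have := hj a ha b hb hab
      have hval : min (e a b) i = (j : ℕ) := congrArg Fin.val this
      have hjle : (j : ℕ) ≤ i := by omega
      have : (j : ℕ) = i := by omega
      show i ≤ e a b
      omega

/-- the key combinatorial step for p-points -/
lemma taskH {B : Set ℕ} (hB : Good B) (h : ℕ → ℕ) :
    ∃ C : Set ℕ, C ⊆ B ∧ Good C ∧ ∃ v w : ℕ, ∀ u : ℕ, u ≠ v → u ≠ w →
      (C ∩ h ⁻¹' {u}).Finite := by
  obtain ⟨v₁, fam₁⟩ := orient B (fun _ _ => True) (fun _ _ _ _ _ => trivial)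
    (fun _ _ _ _ _ => trivial) (fun m i => by
      obtain ⟨F, h1, h2, h3⟩ := hB m; exact ⟨F, h1, h2, h3, trivial⟩)
    (fun a b => h (Nat.pair a b))
  obtain ⟨v₂, fam₂⟩ := orient B
    (fun i F => ∀ a ∈ F, ∀ b ∈ F, a < b → OMatch v₁ i (h (Nat.pair a b)))
    (fun i F G hGF hF a ha b hb hab => hF a (hGF ha) b (hGF hb) hab)
    (fun i j F hij hF a ha b hb hab => OMatch_anti hij (hF a ha b hb hab))
    (fun m i => by
      obtain ⟨F, h1, h2, h3, _, h5⟩ := fam₁ m i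
      exact ⟨F, h1, h2, h3, h5⟩)
    (fun a b => h (Nat.pair b a))
  choose F hF1 hF2 hF3 hF4 hF5 using fun i => fam₂ i i
  refine ⟨⋃ i, pairsSet (F i), ?_, ?_, v₁.getD 0, v₂.getD 0, ?_⟩
  · exact Set.iUnion_subset fun i => hF3 i
  · intro m
    exact ⟨F m, hF1 m, hF2 m, Set.subset_iUnion (fun i => pairsSet (F i)) m⟩
  · intro u hu1 hu2
    apply Set.Finite.subset (Set.Finite.biUnion (Set.finite_Iic u)
      (fun i _ => pairsSet_finite (F i)))
    rintro n ⟨hn, hnu⟩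
    simp only [Set.mem_iUnion] at hn
    obtain ⟨i, hi⟩ := hn
    simp only [Set.mem_preimage, Set.mem_singleton_iff] at hnu
    refine Set.mem_biUnion (show i ∈ Set.Iic u from ?_) hi
    obtain ⟨a, ha, b, hb, hab, rfl⟩ := hi
    rcases Nat.lt_or_ge a b with hab' | hab'
    · -- orientation 1
      have := hF4 i a ha b hb hab'
      cases hv : v₁ with
      | some c =>
        exfalso
        rw [hv] at this
        simp only [OMatch] at this
        rw [hv] at hu1
        simp only [Option.getD] at hu1
        omega
      | none =>
        rw [hv] at this
        simp only [OMatch] at this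
        simp only [Set.mem_Iic]
        omega
    · have hba : b < a := by omega
      have := hF5 i b hb a ha hba
      cases hv : v₂ with
      | some c =>
        exfalso
        rw [hv] at this
        simp only [OMatch] at this
        rw [hv] at hu2
        simp only [Option.getD] at hu2
        omega
      | none =>
        rw [hv] at this
        simp only [OMatch] at this
        simp only [Set.mem_Iic]
        omega


/-- agreement set for X -/
def Agree (X : Set ℕ) : Set ℕ :=
  {n | ((Nat.unpair n).1 ∈ X ↔ (Nat.unpair n).2 ∈ X)}

lemma taskE {B : Set ℕ} (hB : Good B) (X : Set ℕ) : Good (B ∩ Agree X) := by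
  intro m
  obtain ⟨F, h1, h2, h3⟩ := hB (2*m)
  set F1 := F.filter (fun x => x ∈ X) with hF1
  set F2 := F.filter (fun x => x ∉ X) with hF2
  have hcard : F1.card + F2.card = F.card := Finset.card_filter_add_card_filter_not
    (fun x => x ∈ X)
  have hbig : m ≤ F1.card ∨ m ≤ F2.card := by omega
  rcases hbig with hbig | hbig
  · refine ⟨F1, hbig, fun a ha b hb => h2 a (Finset.mem_of_mem_filter a ha)
      b (Finset.mem_of_mem_filter b hb), ?_⟩
    rintro n ⟨a, ha, b, hb, hab, rfl⟩
    have haX : a ∈ X := (Finset.mem_filter.1 ha).2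
    have hbX : b ∈ X := (Finset.mem_filter.1 hb).2
    refine ⟨h3 ⟨a, Finset.mem_of_mem_filter a ha, b, Finset.mem_of_mem_filter b hb, hab, rfl⟩, ?_⟩
    simp only [Agree, Set.mem_setOf_eq, Nat.unpair_pair]
    exact iff_of_true haX hbX
  · refine ⟨F2, hbig, fun a ha b hb => h2 a (Finset.mem_of_mem_filter a ha)
      b (Finset.mem_of_mem_filter b hb), ?_⟩
    rintro n ⟨a, ha, b, hb, hab, rfl⟩
    have haX : a ∉ X := (Finset.mem_filter.1 ha).2
    have hbX : b ∉ X := (Finset.mem_filter.1 hb).2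
    refine ⟨h3 ⟨a, Finset.mem_of_mem_filter a ha, b, Finset.mem_of_mem_filter b hb, hab, rfl⟩, ?_⟩
    simp only [Agree, Set.mem_setOf_eq, Nat.unpair_pair]
    exact iff_of_false haX hbX

lemma good_diff_finite {S E : Set ℕ} (hS : Good S) (hE : E.Finite) : Good (S \ E) := by
  intro m
  set E' := hE.toFinset with hE'
  set K := E'.biUnion (fun x => {(Nat.unpair x).1, (Nat.unpair x).2}) with hK
  obtain ⟨F, h1, h2, h3⟩ := hS (m + K.card)
  refine ⟨F \ K, ?_, fun a ha b hb => h2 a (Finset.sdiff_subset ha)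
    b (Finset.sdiff_subset hb), ?_⟩
  · have hsub2 : F ⊆ (F \ K) ∪ K := fun x hx => by
      by_cases hxK : x ∈ K
      · exact Finset.mem_union_right _ hxK
      · exact Finset.mem_union_left _ (Finset.mem_sdiff.2 ⟨hx, hxK⟩)
    have := (Finset.card_le_card hsub2).trans (Finset.card_union_le _ _)
    omega
  · rintro n ⟨a, ha, b, hb, hab, rfl⟩
    have haF : a ∈ F := (Finset.mem_sdiff.1 ha).1
    have hbF : b ∈ F := (Finset.mem_sdiff.1 hb).1
    refine ⟨h3 ⟨a, haF, b, hbF, hab, rfl⟩, ?_⟩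
    intro hmem
    apply (Finset.mem_sdiff.1 ha).2
    rw [hK]
    apply Finset.mem_biUnion.2
    refine ⟨Nat.pair a b, hE.mem_toFinset.2 hmem, ?_⟩
    simp [Nat.unpair_pair]

/-- pseudo-intersection of a decreasing sequence of good sets -/
lemma pseudo (T : ℕ → Set ℕ) (hT : ∀ n, Good (T n))
    (hdec : ∀ m n, m ≤ n → T n ⊆ T m) :
    ∃ B : Set ℕ, Good B ∧ (∀ F' ∈ {F' : Finset ℕ | True}, True) ∧
      (∀ n, (B \ T n).Finite) ∧ ∃ Fs : ℕ → Finset ℕ, (∀ n, SameBlk (Fs n)) ∧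
        B = ⋃ n, pairsSet (Fs n) := by
  choose F h1 h2 h3 using fun n => hT n n
  refine ⟨⋃ n, pairsSet (F n), ?_, fun _ _ => trivial, ?_, F, h2, rfl⟩
  · intro m
    exact ⟨F m, h1 m, h2 m, Set.subset_iUnion (fun n => pairsSet (F n)) m⟩
  · intro n
    apply Set.Finite.subset (Set.Finite.biUnion (Set.finite_Iio n)
      (fun k _ => pairsSet_finite (F k)))
    rintro x ⟨hx, hnx⟩
    simp only [Set.mem_iUnion] at hx
    obtain ⟨k, hk⟩ := hx
    refine Set.mem_biUnion (show k ∈ Set.Iio n from ?_) hk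
    simp only [Set.mem_Iio]
    by_contra hcon
    exact hnx (hdec n k (by omega) (h3 k hk))

/-- diagonalization through a countable mod-finite chain of good sets -/
lemma diag (P : ℕ → Set ℕ) (hP : ∀ n, Good (P n))
    (hchain : ∀ m n, (P m \ P n).Finite ∨ (P n \ P m).Finite) :
    ∃ B : Set ℕ, Good B ∧ (∀ n, (B \ P n).Finite) ∧
      ∃ Fs : ℕ → Finset ℕ, (∀ n, SameBlk (Fs n)) ∧ B = ⋃ n, pairsSet (Fs n) := by
  set T : ℕ → Set ℕ := fun n => ⋂ k ∈ Set.Iic n, P k with hT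
  have hTsub : ∀ n k, k ≤ n → T n ⊆ P k := by
    intro n k hk
    exact Set.biInter_subset_of_mem hk
  have hTdec : ∀ m n, m ≤ n → T n ⊆ T m := by
    intro m n hmn
    apply Set.subset_iInter₂
    intro k hk
    exact hTsub n k (le_trans hk hmn)
  -- each T n is good
  have hTgood : ∀ n, Good (T n) := by
    intro n
    -- find a mod-finite minimal element among P 0, ..., P n
    have : ∀ j : ℕ, ∃ k ≤ j, ((P k) \ (T j)).Finite := by
      intro j
      induction j with
      | zero =>
        refine ⟨0, le_refl 0, ?_⟩
        have : T 0 = P 0 := by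
          apply Set.Subset.antisymm (hTsub 0 0 (le_refl 0))
          apply Set.subset_iInter₂
          intro k hk
          simp only [Set.mem_Iic, Nat.le_zero] at hk
          subst hk; exact fun x h => h
        rw [this]; simp
      | succ j ihj =>
        obtain ⟨k, hkj, hkfin⟩ := ihj
        have hTsucc : T (j+1) = T j ∩ P (j+1) := by
          apply Set.Subset.antisymm
          · exact Set.subset_inter (hTdec j (j+1) (by omega)) (hTsub (j+1) (j+1) (le_refl _))
          · apply Set.subset_iInter₂
            intro l hl
            simp only [Set.mem_Iic] at hl
            rcases Nat.lt_or_ge l (j+1) with hl' | hl'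
            · exact fun x hx => hTsub j l (by omega) hx.1
            · have : l = j+1 := by omega
              subst this
              exact fun x hx => hx.2
        rcases hchain (j+1) k with hfin | hfin
        · refine ⟨j+1, le_refl _, ?_⟩
          rw [hTsucc]
          apply Set.Finite.subset (Set.Finite.union hfin hkfin)
          intro x hx
          by_cases hxk : x ∈ P k
          · exact Or.inr ⟨hxk, fun hcon => hx.2 ⟨hcon, hx.1⟩⟩
          · exact Or.inl ⟨hx.1, hxk⟩
        · refine ⟨k, by omega, ?_⟩
          rw [hTsucc]
          apply Set.Finite.subset (Set.Finite.union hfin hkfin)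
          intro x hx
          simp only [Set.mem_diff, Set.mem_inter_iff, not_and] at hx
          by_cases hxT : x ∈ T j
          · exact Or.inl ⟨hx.1, fun hcon => hx.2 hxT hcon⟩
          · exact Or.inr ⟨hx.1, hxT⟩
    obtain ⟨k, hkn, hkfin⟩ := this n
    have : P k \ (P k \ T n) ⊆ T n := by
      intro x hx
      simp only [Set.mem_diff, not_and, not_not] at hx
      exact hx.2 hx.1
    exact (good_diff_finite (hP k) hkfin).mono this
  obtain ⟨B, hBgood, _, hBfin, Fs, hFs, hBeq⟩ := pseudo T hTgood hTdec
  refine ⟨B, hBgood, ?_, Fs, hFs, hBeq⟩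
  intro n
  exact (hBfin n).subset (fun x hx => ⟨hx.1, fun hcon => hx.2 (hTsub n n (le_refl n) hcon)⟩)


variable {ι : Type} [LinearOrder ι] [WellFoundedLT ι]

noncomputable def f₀ (n : ℕ) : ℕ := if n ∈ D then (Nat.unpair n).1 else n
noncomputable def g₀ (n : ℕ) : ℕ := if n ∈ D then (Nat.unpair n).2 else n

lemma finToOne_f₀ : FinToOne f₀ := by
  intro v
  apply Set.Finite.subset (Set.Finite.union (Set.finite_singleton v)
    ((Set.finite_Iio (2^(blk v + 1))).image (fun b => Nat.pair v b)))
  intro n hn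
  simp only [Set.mem_preimage, Set.mem_singleton_iff, f₀] at hn
  by_cases hD : n ∈ D
  · rw [if_pos hD] at hn
    right
    obtain ⟨hne, hblk⟩ := hD
    refine ⟨(Nat.unpair n).2, ?_, by simpa [← hn] using Nat.pair_unpair n⟩
    simp only [Set.mem_Iio]
    have : (Nat.unpair n).2 + 1 < 2 ^ (blk (Nat.unpair n).2 + 1) :=
      Nat.lt_pow_succ_log_self (by omega) _
    rw [← hblk, hn] at this
    omega
  · rw [if_neg hD] at hn
    exact Or.inl hn

lemma finToOne_g₀ : FinToOne g₀ := by
  intro v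
  apply Set.Finite.subset (Set.Finite.union (Set.finite_singleton v)
    ((Set.finite_Iio (2^(blk v + 1))).image (fun a => Nat.pair a v)))
  intro n hn
  simp only [Set.mem_preimage, Set.mem_singleton_iff, g₀] at hn
  by_cases hD : n ∈ D
  · rw [if_pos hD] at hn
    right
    obtain ⟨hne, hblk⟩ := hD
    refine ⟨(Nat.unpair n).1, ?_, by simpa [← hn] using Nat.pair_unpair n⟩
    simp only [Set.mem_Iio]
    have : (Nat.unpair n).1 + 1 < 2 ^ (blk (Nat.unpair n).1 + 1) :=
      Nat.lt_pow_succ_log_self (by omega) _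
    rw [hblk, hn] at this
    omega
  · rw [if_neg hD] at hn
    exact Or.inl hn

variable {ι : Type} [LinearOrder ι] [WellFoundedLT ι]

lemma main_ex (t : ι → Set ℕ × (ℕ → ℕ)) (i : ι) (hc : Countable {j : ι // j < i})
    (prev : ∀ j : ι, j < i → Set ℕ) :
    ∃ S : Set ℕ, (Good S ∧ S ⊆ D) ∧
      (((∀ j hj, Good (prev j hj)) ∧
        (∀ j hj k hk, (prev j hj \ prev k hk).Finite ∨ (prev k hk \ prev j hj).Finite)) →
       ((∀ j hj, (S \ prev j hj).Finite) ∧ S ⊆ Agree (t i).1 ∧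
        ∃ v w, ∀ u, u ≠ v → u ≠ w → (S ∩ (t i).2 ⁻¹' {u}).Finite)) := by
  by_cases Hinv : (∀ j hj, Good (prev j hj)) ∧
      (∀ j hj k hk, (prev j hj \ prev k hk).Finite ∨ (prev k hk \ prev j hj).Finite)
  · -- get a good pseudo-intersection B ⊆ D
    have hB : ∃ B : Set ℕ, Good B ∧ B ⊆ D ∧ ∀ j hj, (B \ prev j hj).Finite := by
      rcases isEmpty_or_nonempty {j : ι // j < i} with hemp | hne
      · exact ⟨D, good_D, subset_refl D, fun j hj => (hemp.elim ⟨j, hj⟩)⟩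
      · obtain ⟨σ, hσ⟩ := exists_surjective_nat {j : ι // j < i}
        obtain ⟨B, h1, h2, Fs, h3, h4⟩ := diag (fun n => prev (σ n).1 (σ n).2)
          (fun n => Hinv.1 _ _) (fun m n => Hinv.2 _ _ _ _)
        refine ⟨B, h1, ?_, ?_⟩
        · rw [h4]
          exact Set.iUnion_subset (fun n => pairsSet_subset_D (h3 n))
        · intro j hj
          obtain ⟨n, hn⟩ := hσ ⟨j, hj⟩
          have := h2 n
          rw [hn] at this
          exact this
    obtain ⟨B, hBgood, hBD, hBfin⟩ := hB
    have hB1 : Good (B ∩ Agree (t i).1) := taskE hBgood (t i).1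
    obtain ⟨C, hC1, hC2, v, w, hC3⟩ := taskH hB1 (t i).2
    refine ⟨C, ⟨hC2, (hC1.trans Set.inter_subset_left).trans hBD⟩, fun _ => ?_⟩
    refine ⟨fun j hj => (hBfin j hj).subset ?_, hC1.trans Set.inter_subset_right,
      v, w, hC3⟩
    intro x hx
    exact ⟨(hC1.trans Set.inter_subset_left) hx.1, hx.2⟩
  · exact ⟨D, ⟨good_D, subset_refl D⟩, fun h => absurd h Hinv⟩

noncomputable def chainA (t : ι → Set ℕ × (ℕ → ℕ))
    (hc : ∀ i : ι, Countable {j : ι // j < i}) : ι → Set ℕ :=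
  wellFounded_lt.fix (fun i rec => Classical.choose (main_ex t i (hc i) rec))

lemma chainA_eq (t : ι → Set ℕ × (ℕ → ℕ)) (hc : ∀ i : ι, Countable {j : ι // j < i})
    (i : ι) : chainA t hc i =
      Classical.choose (main_ex t i (hc i) (fun j _ => chainA t hc j)) := by
  exact wellFounded_lt.fix_eq _ i

lemma chainA_spec1 (t : ι → Set ℕ × (ℕ → ℕ)) (hc : ∀ i : ι, Countable {j : ι // j < i})
    (i : ι) : Good (chainA t hc i) ∧ chainA t hc i ⊆ D := by
  rw [chainA_eq]
  exact (Classical.choose_spec (main_ex t i (hc i) (fun j _ => chainA t hc j))).1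

lemma chainA_spec2 (t : ι → Set ℕ × (ℕ → ℕ)) (hc : ∀ i : ι, Countable {j : ι // j < i}) :
    ∀ i : ι, (∀ j, j < i → (chainA t hc i \ chainA t hc j).Finite) ∧
      chainA t hc i ⊆ Agree (t i).1 ∧
      ∃ v w, ∀ u, u ≠ v → u ≠ w → (chainA t hc i ∩ (t i).2 ⁻¹' {u}).Finite := by
  intro i₀
  refine wellFounded_lt.induction (C := fun i : ι =>
    (∀ j, j < i → (chainA t hc i \ chainA t hc j).Finite) ∧
      chainA t hc i ⊆ Agree (t i).1 ∧
      ∃ v w, ∀ u, u ≠ v → u ≠ w → (chainA t hc i ∩ (t i).2 ⁻¹' {u}).Finite) i₀ ?_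
  intro i IH
  · have Hinv : (∀ j (hj : j < i), Good (chainA t hc j)) ∧
        (∀ j (hj : j < i) k (hk : k < i),
          (chainA t hc j \ chainA t hc k).Finite ∨
          (chainA t hc k \ chainA t hc j).Finite) := by
      constructor
      · intro j _; exact (chainA_spec1 t hc j).1
      · intro j hj k hk
        rcases lt_trichotomy j k with h | h | h
        · exact Or.inr ((IH k hk).1 j h)
        · subst h; left; simp
        · exact Or.inl ((IH j hj).1 k h)
    have h := (Classical.choose_spec (main_ex t i (hc i) (fun j _ => chainA t hc j))).2 Hinv
    rw [← chainA_eq t hc i] at h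
    exact h

lemma main (t : ι → Set ℕ × (ℕ → ℕ)) (ht : Function.Surjective t)
    (hc : ∀ i : ι, Countable {j : ι // j < i}) [Nonempty ι] :
    ∃ U : Ultrafilter ℕ, IsPPoint U ∧ ¬ IsWeaklyHausdorffUltra U := by
  set A : ι → Set ℕ := chainA t hc with hA
  have hgood : ∀ i, Good (A i) := fun i => (chainA_spec1 t hc i).1
  have hD : ∀ i, A i ⊆ D := fun i => (chainA_spec1 t hc i).2
  have hchain : ∀ i j, j < i → (A i \ A j).Finite := fun i => (chainA_spec2 t hc i).1
  have hagree : ∀ i, A i ⊆ Agree (t i).1 := fun i => (chainA_spec2 t hc i).2.1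
  have hfib : ∀ i, ∃ v w, ∀ u, u ≠ v → u ≠ w → (A i ∩ (t i).2 ⁻¹' {u}).Finite :=
    fun i => (chainA_spec2 t hc i).2.2
  -- the filter
  set G : ι → Filter ℕ := fun i => Filter.cofinite ⊓ Filter.principal (A i) with hG
  have hGneBot : ∀ i, Filter.NeBot (G i) := by
    intro i
    rw [hG]
    rw [Filter.inf_principal_neBot_iff]
    intro U hU
    rcases Set.not_subset.1 (fun hsub => ((hgood i).infinite) (Set.Finite.subset hU hsub)) with
      ⟨x, hx1, hx2⟩
    exact ⟨x, by simpa using hx2, hx1⟩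
  have hle : ∀ i j, j ≤ i → G i ≤ G j := by
    intro i j hj
    rcases eq_or_lt_of_le hj with rfl | hj
    · exact le_refl _
    · apply le_inf inf_le_left
      rw [Filter.le_principal_iff, Filter.mem_inf_principal]
      have : ((A i \ A j)ᶜ : Set ℕ) ⊆ {x | x ∈ A i → x ∈ A j} := by
        intro x hx hxi
        by_contra hcon
        exact hx ⟨hxi, hcon⟩
      exact Filter.mem_of_superset ((hchain i j hj).compl_mem_cofinite) this
  have hdir : Directed (· ≥ ·) G := by
    intro i j
    exact ⟨max i j, hle _ i (le_max_left i j), hle _ j (le_max_right i j)⟩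
  haveI : Filter.NeBot (⨅ i, G i) := Filter.iInf_neBot_of_directed hdir hGneBot
  obtain ⟨U, hU⟩ := Ultrafilter.exists_le (⨅ i, G i)
  have hUG : ∀ i, ↑U ≤ G i := fun i => hU.trans (iInf_le G i)
  have hAU : ∀ i, A i ∈ U := fun i => Filter.le_principal_iff.1 ((hUG i).trans inf_le_right)
  have hcof : ∀ s : Set ℕ, sᶜ.Finite → s ∈ U := by
    intro s hs
    exact ((hUG (Classical.arbitrary ι)).trans inf_le_left) hs
  refine ⟨U, ⟨?_, ?_⟩, ?_⟩
  · -- nonprincipal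
    intro n hn
    have h1 : ({n}ᶜ : Set ℕ) ∈ U := hcof _ (by simp)
    rw [hn] at h1
    simp at h1
  · -- p-point
    intro Xs hXs
    set Z : ℕ → Set ℕ := fun n => ⋂ k ∈ Set.Iic n, Xs k with hZ
    have hZU : ∀ n, Z n ∈ U := by
      intro n
      have : (⋂ k ∈ Set.Iic n, Xs k) ∈ U :=
        (Filter.biInter_mem (Set.finite_Iic n)).2 (fun k _ => hXs k)
      exact this
    have hZXs : ∀ n, Z n ⊆ Xs n := fun n => Set.biInter_subset_of_mem (Set.mem_Iic.2 le_rfl)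
    set h : ℕ → ℕ := fun x => if H : ∃ n, x ∉ Z n then Nat.find H + 1 else 0 with hh
    obtain ⟨i, hi⟩ := ht (∅, h)
    have hi2 : (t i).2 = h := by rw [hi]
    obtain ⟨v, w, hvw⟩ := hfib i
    rw [hi2] at hvw
    -- case analysis
    by_cases hv : A i ∩ h ⁻¹' {v} ∈ U
    · -- h constant = v on a set in U
      rcases Nat.eq_zero_or_pos v with rfl | hvpos
      · refine ⟨A i ∩ h ⁻¹' {0}, hv, fun n => ?_⟩
        have : (A i ∩ h ⁻¹' {0}) \ Xs n = ∅ := by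
          apply Set.eq_empty_iff_forall_notMem.2
          rintro x ⟨⟨_, hx0⟩, hxn⟩
          simp only [Set.mem_preimage, Set.mem_singleton_iff, hh] at hx0
          by_cases H : ∃ m, x ∉ Z m
          · rw [dif_pos H] at hx0; omega
          · push_neg at H
            exact hxn (hZXs n (H n))
        rw [this]; exact Set.finite_empty
      · exfalso
        obtain ⟨m, hm⟩ : ∃ m, v = m + 1 := ⟨v - 1, by omega⟩
        have hmem : (A i ∩ h ⁻¹' {v}) ∩ Z m ∈ U := Filter.inter_mem hv (hZU m)
        obtain ⟨x, ⟨⟨_, hx0⟩, hxZ⟩⟩ := Ultrafilter.nonempty_of_mem hmem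
        simp only [Set.mem_preimage, Set.mem_singleton_iff, hh] at hx0
        by_cases H : ∃ n, x ∉ Z n
        · rw [dif_pos H] at hx0
          have hfind : Nat.find H = m := by omega
          have := Nat.find_spec H
          rw [hfind] at this
          exact this hxZ
        · rw [dif_neg H] at hx0; omega
    · by_cases hw : A i ∩ h ⁻¹' {w} ∈ U
      · -- same with w
        rcases Nat.eq_zero_or_pos w with rfl | hwpos
        · refine ⟨A i ∩ h ⁻¹' {0}, hw, fun n => ?_⟩
          have : (A i ∩ h ⁻¹' {0}) \ Xs n = ∅ := by
            apply Set.eq_empty_iff_forall_notMem.2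
            rintro x ⟨⟨_, hx0⟩, hxn⟩
            simp only [Set.mem_preimage, Set.mem_singleton_iff, hh] at hx0
            by_cases H : ∃ m, x ∉ Z m
            · rw [dif_pos H] at hx0; omega
            · push_neg at H
              exact hxn (hZXs n (H n))
          rw [this]; exact Set.finite_empty
        · exfalso
          obtain ⟨m, hm⟩ : ∃ m, w = m + 1 := ⟨w - 1, by omega⟩
          have hmem : (A i ∩ h ⁻¹' {w}) ∩ Z m ∈ U := Filter.inter_mem hw (hZU m)
          obtain ⟨x, ⟨⟨_, hx0⟩, hxZ⟩⟩ := Ultrafilter.nonempty_of_mem hmem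
          simp only [Set.mem_preimage, Set.mem_singleton_iff, hh] at hx0
          by_cases H : ∃ n, x ∉ Z n
          · rw [dif_pos H] at hx0
            have hfind : Nat.find H = m := by omega
            have := Nat.find_spec H
            rw [hfind] at this
            exact this hxZ
          · rw [dif_neg H] at hx0; omega
      · -- h is finite-to-one on X
        have hvc : (h ⁻¹' {v})ᶜ ∈ U := by
          rw [Ultrafilter.compl_mem_iff_notMem]
          intro hcon
          exact hv (Filter.inter_mem (hAU i) hcon)
        have hwc : (h ⁻¹' {w})ᶜ ∈ U := by
          rw [Ultrafilter.compl_mem_iff_notMem]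
          intro hcon
          exact hw (Filter.inter_mem (hAU i) hcon)
        set X := (A i ∩ (h ⁻¹' {v})ᶜ) ∩ (h ⁻¹' {w})ᶜ with hX
        refine ⟨X, Filter.inter_mem (Filter.inter_mem (hAU i) hvc) hwc, fun n => ?_⟩
        have hXfin : ∀ u, (X ∩ h ⁻¹' {u}).Finite := by
          intro u
          by_cases huv : u = v
          · subst huv
            apply Set.Finite.subset (Set.finite_empty)
            rintro x ⟨⟨⟨_, hx1⟩, _⟩, hx2⟩
            exact hx1 hx2
          · by_cases huw : u = w
            · subst huw
              apply Set.Finite.subset (Set.finite_empty)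
              rintro x ⟨⟨_, hx1⟩, hx2⟩
              exact hx1 hx2
            · apply (hvw u huv huw).subset
              rintro x ⟨hx1, hx2⟩
              exact ⟨hx1.1.1, hx2⟩
        apply Set.Finite.subset (Set.Finite.biUnion (Set.finite_Iic (n+1))
          (fun u _ => hXfin u))
        rintro x ⟨hx1, hx2⟩
        have hxZ : x ∉ Z n := fun hcon => hx2 (hZXs n hcon)
        have H : ∃ m, x ∉ Z m := ⟨n, hxZ⟩
        have hfind : Nat.find H ≤ n := Nat.find_min' H hxZ
        have hhx : h x = Nat.find H + 1 := dif_pos H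
        refine Set.mem_biUnion (show h x ∈ Set.Iic (n+1) from ?_) ⟨hx1, rfl⟩
        simp only [Set.mem_Iic]
        omega
  · -- not weakly Hausdorff
    intro hWH
    have hmap : Ultrafilter.map f₀ U = Ultrafilter.map g₀ U := by
      apply Ultrafilter.coe_injective
      apply Filter.ext
      intro s
      simp only [Ultrafilter.coe_map, Filter.mem_map]
      obtain ⟨i, hi⟩ := ht (s, fun _ => 0)
      have hi1 : (t i).1 = s := by rw [hi]
      have hkey : ∀ x ∈ A i, (x ∈ f₀ ⁻¹' s ↔ x ∈ g₀ ⁻¹' s) := by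
        intro x hx
        have hxD : x ∈ D := hD i hx
        have hxA : x ∈ Agree s := by
          have := hagree i hx
          rwa [hi1] at this
        simp only [Set.mem_preimage, f₀, g₀, if_pos hxD]
        exact hxA
      constructor
      · intro hs
        apply Filter.mem_of_superset (Filter.inter_mem hs (hAU i))
        rintro x ⟨hx1, hx2⟩
        exact (hkey x hx2).1 hx1
      · intro hs
        apply Filter.mem_of_superset (Filter.inter_mem hs (hAU i))
        rintro x ⟨hx1, hx2⟩
        exact (hkey x hx2).2 hx1
    obtain ⟨X, hXU, hXeq⟩ := hWH f₀ g₀ finToOne_f₀ finToOne_g₀ hmap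
    have hmem : X ∩ A (Classical.arbitrary ι) ∈ U :=
      Filter.inter_mem hXU (hAU _)
    obtain ⟨x, hx1, hx2⟩ := Ultrafilter.nonempty_of_mem hmem
    have hxD : x ∈ D := hD _ hx2
    have := hXeq x hx1
    simp only [f₀, g₀, if_pos hxD] at this
    exact hxD.1 this


end PPH

/-- Under CH there is a p-point that is not weakly Hausdorff. -/
theorem exists_pPoint_not_weaklyHausdorff_of_CH
    (ch : (2 : Cardinal) ^ Cardinal.aleph0 = Cardinal.aleph 1) :
    ∃ U : Ultrafilter ℕ, IsPPoint U ∧ ¬ IsWeaklyHausdorffUltra U := by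
  have ch0 : (2 : Cardinal.{0}) ^ Cardinal.aleph0 = Cardinal.aleph 1 := by
    apply Cardinal.lift_injective.{_, 0}
    rw [Cardinal.lift_power, Cardinal.lift_two, Cardinal.lift_aleph0, Cardinal.lift_aleph]
    simpa using ch
  set ι := (Cardinal.aleph (1 : Ordinal.{0})).ord.ToType with hι
  haveI : Nonempty ι := by
    rw [hι, Ordinal.toType_nonempty_iff_ne_zero]
    rw [ne_eq, Cardinal.ord_eq_zero]
    intro hcon
    exact (Cardinal.aleph_pos 1).ne' hcon
  have hcard : Cardinal.mk (Set ℕ × (ℕ → ℕ)) = Cardinal.mk ι := by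
    have h1 : Cardinal.mk (Set ℕ) = (2 : Cardinal) ^ Cardinal.aleph0 := by
      rw [Cardinal.mk_set, Cardinal.mk_nat]
    have h2 : Cardinal.mk (ℕ → ℕ) = (2 : Cardinal) ^ Cardinal.aleph0 := by
      rw [← Cardinal.power_def, Cardinal.mk_nat]
      exact Cardinal.power_self_eq le_rfl
    have h3 : Cardinal.mk (Set ℕ × (ℕ → ℕ)) = Cardinal.mk (Set ℕ) * Cardinal.mk (ℕ → ℕ) := by
      rw [Cardinal.mk_prod, Cardinal.lift_id, Cardinal.lift_id]
    rw [h3, h1, h2, ch0, Cardinal.mul_eq_self (Cardinal.aleph0_le_aleph 1)]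
    rw [hι, Cardinal.mk_toType, Cardinal.card_ord]
  obtain ⟨e⟩ := Cardinal.eq.1 hcard
  have hc : ∀ i : ι, Countable {j : ι // j < i} := by
    intro i
    have h1 : Cardinal.mk (Set.Iio i) < Cardinal.aleph 1 := Cardinal.mk_Iio_ord_toType (c := Cardinal.aleph 1) i
    have h2 : (Set.Iio i).Countable := (Cardinal.countable_iff_lt_aleph_one _).2 h1
    exact h2.to_subtype
  exact PPH.main e.symm e.symm.surjective hc
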